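/- For 0 < v < 1, the four vector-valued functions L₁(t) = (tanh(√2 v t), 0, √2 v sech(√2 v t)², 0), L₂(t) = (√2 v t tanh(√2 v t) - 1, 0, 2v² t sech(√2 v t)² + √2 v tanh(√2 v t), 0), L₃(t) = (0, 1, 0, 0), L₄(t) = (0, t, 0, 1) are solutions of the linear ODE system L'(t) = M(t) L(t), where M(t) is the 4×4 matrix with M₁₃ = M₂₄ = 1, M₃₁ = -32 e^{-√2 d_v(t)} = -4 v² sech(√2 v t)², and all other entries zero. -/

import Mathlib

open Real

noncomputable def dv (v t : ℝ) : ℝ :=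
  (1 / Real.sqrt 2) * Real.log ((8 / v ^ 2) * Real.cosh (Real.sqrt 2 * v * t) ^ 2)

/-- `(a, b, c, d)` solves the linear system `x₁' = x₃`, `x₂' = x₄`,
`x₃' = -32 e^{-√2 d_v(t)} x₁`, `x₄' = 0`. -/
def IsSolLinSys (v : ℝ) (a b c d : ℝ → ℝ) : Prop :=
  ∀ t : ℝ, deriv a t = c t ∧ deriv b t = d t ∧
    deriv c t = -32 * Real.exp (-(Real.sqrt 2) * dv v t) * a t ∧
    deriv d t = 0

lemma aux_hasDerivAt_tanh (x : ℝ) :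
    HasDerivAt Real.tanh ((1 / Real.cosh x) ^ 2) x := by
  have hc := Real.cosh_pos x
  have h := (Real.hasDerivAt_sinh x).div (Real.hasDerivAt_cosh x) hc.ne'
  have heq : (Real.cosh x * Real.cosh x - Real.sinh x * Real.sinh x) / Real.cosh x ^ 2
      = (1 / Real.cosh x) ^ 2 := by
    have h1 : Real.cosh x ^ 2 - Real.sinh x ^ 2 = 1 := Real.cosh_sq_sub_sinh_sq x
    field_simp
    nlinarith [h1]
  rw [heq] at h
  have : Real.tanh = fun x => Real.sinh x / Real.cosh x := by
    funext y; exact Real.tanh_eq_sinh_div_cosh y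
  rw [this]
  exact h

lemma aux_hT (c t : ℝ) :
    HasDerivAt (fun t => Real.tanh (c * t)) (c * (1 / Real.cosh (c * t)) ^ 2) t := by
  have hlin : HasDerivAt (fun t : ℝ => c * t) c t := by
    simpa using (hasDerivAt_id t).const_mul c
  have := (aux_hasDerivAt_tanh (c * t)).comp t hlin
  simpa [mul_comm, Function.comp_def] using this

lemma aux_hS (c t : ℝ) :
    HasDerivAt (fun t => (1 / Real.cosh (c * t)) ^ 2)
      (-2 * c * Real.tanh (c * t) * (1 / Real.cosh (c * t)) ^ 2) t := by
  have hc : ∀ u : ℝ, Real.cosh u ≠ 0 := fun u => (Real.cosh_pos u).ne'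
  have hinv : ∀ u : ℝ, HasDerivAt (fun u => (Real.cosh u)⁻¹)
      (-(Real.sinh u) / Real.cosh u ^ 2) u := fun u =>
    (Real.hasDerivAt_cosh u).inv (hc u)
  have hlin : HasDerivAt (fun t : ℝ => c * t) c t := by
    simpa using (hasDerivAt_id t).const_mul c
  have h1 := ((hinv (c * t)).comp t hlin).pow 2
  have heq : (↑2 : ℕ) * ((Real.cosh (c * t))⁻¹) ^ (2 - 1) *
      (-(Real.sinh (c * t)) / Real.cosh (c * t) ^ 2 * c)
      = -2 * c * Real.tanh (c * t) * (1 / Real.cosh (c * t)) ^ 2 := by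
    rw [Real.tanh_eq_sinh_div_cosh]
    field_simp
    simp only [Nat.cast_ofNat, show (2:ℕ) - 1 = 1 from rfl, pow_one, one_div]
    rw [mul_inv_cancel_right₀ (hc (c * t))]
    ring
  simp only [Function.comp_def] at h1
  rw [heq] at h1
  simpa [one_div, Pi.pow_def] using h1

lemma aux_exp (v t : ℝ) (hv0 : 0 < v) :
    -32 * Real.exp (-(Real.sqrt 2) * dv v t)
      = -4 * v ^ 2 * (1 / Real.cosh (Real.sqrt 2 * v * t)) ^ 2 := by
  have hs2 : (0 : ℝ) < Real.sqrt 2 := Real.sqrt_pos.mpr (by norm_num)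
  have hc := Real.cosh_pos (Real.sqrt 2 * v * t)
  set X := (8 / v ^ 2) * Real.cosh (Real.sqrt 2 * v * t) ^ 2 with hX
  have hXpos : 0 < X := by positivity
  have h1 : -(Real.sqrt 2) * dv v t = -Real.log X := by
    rw [dv, ← hX]
    field_simp
  rw [h1, Real.exp_neg, Real.exp_log hXpos, hX]
  field_simp
  ring

lemma aux_c2 (v : ℝ) : (Real.sqrt 2 * v) ^ 2 = 2 * v ^ 2 := by
  rw [mul_pow, Real.sq_sqrt (by norm_num : (2:ℝ) ≥ 0)]

theorem fundamental_solutions (v : ℝ) (hv0 : 0 < v) (hv1 : v < 1) :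
    IsSolLinSys v (fun t => Real.tanh (Real.sqrt 2 * v * t)) (fun _ => 0)
        (fun t => Real.sqrt 2 * v * (1 / Real.cosh (Real.sqrt 2 * v * t)) ^ 2)
        (fun _ => 0) ∧
    IsSolLinSys v
        (fun t => Real.sqrt 2 * v * t * Real.tanh (Real.sqrt 2 * v * t) - 1)
        (fun _ => 0)
        (fun t => 2 * v ^ 2 * t * (1 / Real.cosh (Real.sqrt 2 * v * t)) ^ 2 +
          Real.sqrt 2 * v * Real.tanh (Real.sqrt 2 * v * t))
        (fun _ => 0) ∧
    IsSolLinSys v (fun _ => 0) (fun _ => 1) (fun _ => 0) (fun _ => 0) ∧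
    IsSolLinSys v (fun _ => 0) (fun t => t) (fun _ => 0) (fun _ => 1) := by
  set c := Real.sqrt 2 * v with hcdef
  have hc2 : c ^ 2 = 2 * v ^ 2 := aux_c2 v
  refine ⟨?_, ?_, ?_, ?_⟩
  · intro t
    refine ⟨?_, by simp, ?_, by simp⟩
    · have h : (fun t => Real.tanh (Real.sqrt 2 * v * t))
          = fun t => Real.tanh (c * t) := rfl
      rw [h, (aux_hT c t).deriv]
    · rw [aux_exp v t hv0]
      have h : (fun t => Real.sqrt 2 * v * (1 / Real.cosh (Real.sqrt 2 * v * t)) ^ 2)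
          = fun t => c * (1 / Real.cosh (c * t)) ^ 2 := rfl
      rw [h, (((aux_hS c t)).const_mul c).deriv]
      have : c * (-2 * c * Real.tanh (c * t) * (1 / Real.cosh (c * t)) ^ 2)
          = -(c ^ 2) * 2 * Real.tanh (c * t) * (1 / Real.cosh (c * t)) ^ 2 := by ring
      rw [this, hc2]
      ring
  · intro t
    refine ⟨?_, by simp, ?_, by simp⟩
    · have ha : HasDerivAt (fun t => Real.sqrt 2 * v * t * Real.tanh (Real.sqrt 2 * v * t) - 1)
          (2 * v ^ 2 * t * (1 / Real.cosh (c * t)) ^ 2 + c * Real.tanh (c * t)) t := by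
        have hlin : HasDerivAt (fun t : ℝ => c * t) c t := by
          simpa using (hasDerivAt_id t).const_mul c
        have h := (hlin.mul (aux_hT c t)).sub_const 1
        have heq : c * Real.tanh (c * t) + c * t * (c * (1 / Real.cosh (c * t)) ^ 2)
            = 2 * v ^ 2 * t * (1 / Real.cosh (c * t)) ^ 2 + c * Real.tanh (c * t) := by
          linear_combination (t * (1 / Real.cosh (c * t)) ^ 2) * hc2
        rw [heq] at h
        exact h
      rw [ha.deriv]
    · rw [aux_exp v t hv0]
      have hlin : HasDerivAt (fun t : ℝ => 2 * v ^ 2 * t) (2 * v ^ 2) t := by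
        simpa using (hasDerivAt_id t).const_mul (2 * v ^ 2)
      have h := (hlin.mul (aux_hS c t)).add ((aux_hT c t).const_mul c)
      rw [HasDerivAt.deriv (f := fun t => 2 * v ^ 2 * t * (1 / Real.cosh (c * t)) ^ 2 + c * Real.tanh (c * t)) h]
      simp only [hcdef]
      linear_combination ((1 / Real.cosh (Real.sqrt 2 * v * t)) ^ 2) * (aux_c2 v)
  · intro t
    exact ⟨by simp, by simp, by simp, by simp⟩
  · intro t
    exact ⟨by simp, by simp, by simp, by simp⟩
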